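/- In the single-state setting, if ∑_{a∈A*} π_k(a) ≥ 1 − (C(1−γ))/(kΔ) and k ≥ ⌈(C(1−γ)/Δ)/(1 − e^{−ηΔλ})⌉ for some λ ∈ (0,1), then ∑_a π_k(a) exp(η(r(a) − r* + Δ)) ≥ exp(ηΔ(1−λ)). -/
import Mathlib


open Finset

attribute [local instance] Classical.propDecidable

/-- In the single-state setting, if `∑_{a∈A*} π_k(a) ≥ 1 − C(1−γ)/(kΔ)` and
`k ≥ ⌈(C(1−γ)/Δ)/(1 − e^{−ηΔλ})⌉` for some `λ ∈ (0,1)`, then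
`∑_a π_k(a) exp(η(r(a) − r* + Δ)) ≥ exp(ηΔ(1−λ))`, where `A* = {a : r(a) = r*}`,
`r* = max_a r(a)`, and `Δ = r* − max_{a∉A*} r(a) > 0`. -/
theorem single_state_denominator_bound {A : Type*} [Fintype A] [Nonempty A]
    (r : A → ℝ) (hr : ∀ a, r a ∈ Set.Icc (0 : ℝ) 1)
    (γ η C lam : ℝ) (hγ : γ ∈ Set.Ioo (0 : ℝ) 1) (hη : 0 < η) (hC : 0 < C)
    (hlam : lam ∈ Set.Ioo (0 : ℝ) 1)
    (rstar : ℝ) (hrstar : IsGreatest (Set.range r) rstar)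
    (Δ : ℝ) (hΔpos : 0 < Δ)
    (hgap : ∀ a, r a < rstar → r a ≤ rstar - Δ)
    (hattain : ∃ a, r a = rstar - Δ)
    (pol : A → ℝ) (hpos : ∀ a, 0 ≤ pol a) (hsum : ∑ a, pol a = 1)
    (k : ℕ)
    (hmass : 1 - C * (1 - γ) / (k * Δ) ≤
      ∑ a ∈ Finset.univ.filter (fun a => r a = rstar), pol a)
    (hk : ⌈(C * (1 - γ) / Δ) / (1 - Real.exp (-η * Δ * lam))⌉₊ ≤ k) :
    Real.exp (η * Δ * (1 - lam)) ≤
      ∑ a, pol a * Real.exp (η * (r a - rstar + Δ)) := by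

  obtain ⟨hγ0, hγ1⟩ := hγ
  obtain ⟨hl0, hl1⟩ := hlam
  have hepos : 0 < 1 - Real.exp (-η * Δ * lam) := by
    have : Real.exp (-η * Δ * lam) < 1 := by
      have : -η * Δ * lam < 0 := by nlinarith [mul_pos (mul_pos hη hΔpos) hl0]
      calc Real.exp (-η * Δ * lam) < Real.exp 0 := Real.exp_lt_exp.2 this
        _ = 1 := Real.exp_zero
    linarith
  have hnum : 0 < C * (1 - γ) / Δ := div_pos (mul_pos hC (by linarith)) hΔpos
  have hkpos : 0 < (k : ℝ) := by
    have : 0 < ⌈(C * (1 - γ) / Δ) / (1 - Real.exp (-η * Δ * lam))⌉₊ := by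
      exact Nat.ceil_pos.2 (div_pos hnum hepos)
    exact_mod_cast lt_of_lt_of_le this hk
  have hxk : (C * (1 - γ) / Δ) / (1 - Real.exp (-η * Δ * lam)) ≤ (k : ℝ) := by
    calc (C * (1 - γ) / Δ) / (1 - Real.exp (-η * Δ * lam))
        ≤ (⌈(C * (1 - γ) / Δ) / (1 - Real.exp (-η * Δ * lam))⌉₊ : ℝ) := Nat.le_ceil _
      _ ≤ (k : ℝ) := by exact_mod_cast hk
  have heps : C * (1 - γ) / (k * Δ) ≤ 1 - Real.exp (-η * Δ * lam) := by
    rw [div_le_iff₀ (by positivity)]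
    have := (div_le_iff₀ hepos).1 hxk
    have h2 := (div_le_iff₀ hΔpos).1 this
    nlinarith
  set S := Finset.univ.filter (fun a => r a = rstar) with hS
  have hfilter : ∑ a ∈ S, pol a * Real.exp (η * (r a - rstar + Δ))
      = (∑ a ∈ S, pol a) * Real.exp (η * Δ) := by
    rw [Finset.sum_mul]
    apply Finset.sum_congr rfl
    intro a ha
    have : r a = rstar := (Finset.mem_filter.1 ha).2
    rw [this]; ring_nf
  have hsub : ∑ a ∈ S, pol a * Real.exp (η * (r a - rstar + Δ))
      ≤ ∑ a, pol a * Real.exp (η * (r a - rstar + Δ)) := by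
    apply Finset.sum_le_sum_of_subset_of_nonneg (Finset.subset_univ _)
    intro a _ _
    exact mul_nonneg (hpos a) (Real.exp_pos _).le
  calc Real.exp (η * Δ * (1 - lam))
      = Real.exp (-η * Δ * lam) * Real.exp (η * Δ) := by
        rw [← Real.exp_add]; ring_nf
    _ ≤ (1 - C * (1 - γ) / (k * Δ)) * Real.exp (η * Δ) := by
        apply mul_le_mul_of_nonneg_right (by linarith) (Real.exp_pos _).le
    _ ≤ (∑ a ∈ S, pol a) * Real.exp (η * Δ) := by
        apply mul_le_mul_of_nonneg_right hmass (Real.exp_pos _).le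
    _ = ∑ a ∈ S, pol a * Real.exp (η * (r a - rstar + Δ)) := hfilter.symm
    _ ≤ _ := hsub
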